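/- Abstract recurrence criterion via product forms: Let (E^{(i)}, m^{(i)}), i = 1, …, N, be measure spaces with symmetric bilinear nonnegative forms 𝓔^{(i)} on subspaces 𝓕^{(i)} ⊆ L²(m^{(i)}). Suppose for each i there is a sequence (u_n^{(i)}) in 𝓕^{(i)} and indices n^{(i)}(k) := inf{ n : 𝓔^{(i)}(u_n^{(i)}, u_n^{(i)}) ≤ (1/k) ‖u_n^{(i)}‖²_{L²(m^{(i)})} }, finite for all k, such that 0 ≤ u^{(i)}_{n^{(i)}(k)} ≤ 1 a.e., u^{(i)}_{n^{(i)}(k)} → 1 a.e. as k → ∞, and (1/k) ∏_{i=1}^N ‖u^{(i)}_{n^{(i)}(k)}‖²_{L²(m^{(i)})} → 0 as k → ∞. Then, defining the product form 𝓔(u, u) := Σ_{i=1}^N 𝓔^{(i)}(u^{(i)}, u^{(i)}) ∏_{j ≠ i} ‖u^{(j)}‖²_{L²(m^{(j)})} for u = u^{(1)} ⊗ ⋯ ⊗ u^{(N)}, the sequence v_k := u^{(1)}_{n^{(1)}(k)} ⊗ ⋯ ⊗ u^{(N)}_{n^{(N)}(k)} satisfies 0 ≤ v_k ≤ 1 a.e.,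 v_k → 1 a.e. (with respect to the product measure), and 𝓔(v_k, v_k) → 0 as k → ∞. -/

import Mathlib

open MeasureTheory Set Filter

theorem stmt8 (N : ℕ) (hN : 1 ≤ N)
    (E : Fin N → Type*) [∀ i, MeasurableSpace (E i)]
    (m : ∀ i, Measure (E i)) [∀ i, SigmaFinite (m i)]
    (Q : ∀ i, (E i → ℝ) → ℝ) (hQnonneg : ∀ i f, 0 ≤ Q i f)
    (u : ∀ i : Fin N, ℕ → E i → ℝ)
    (nk : Fin N → ℕ → ℕ)
    (hmem : ∀ i, ∀ k : ℕ, 1 ≤ k →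
      Q i (u i (nk i k)) ≤ (1 / (k : ℝ)) * ∫ x, (u i (nk i k) x) ^ 2 ∂(m i))
    (hmin : ∀ i, ∀ k n : ℕ, 1 ≤ k → n < nk i k →
      ¬ (Q i (u i n) ≤ (1 / (k : ℝ)) * ∫ x, (u i n x) ^ 2 ∂(m i)))
    (hbd : ∀ i, ∀ k : ℕ, ∀ᵐ x ∂(m i), 0 ≤ u i (nk i k) x ∧ u i (nk i k) x ≤ 1)
    (hlim : ∀ i, ∀ᵐ x ∂(m i), Tendsto (fun k : ℕ => u i (nk i k) x) atTop (nhds 1))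
    (hprod : Tendsto (fun k : ℕ => (1 / (k : ℝ)) * ∏ i, ∫ x, (u i (nk i k) x) ^ 2 ∂(m i))
      atTop (nhds 0))
    (v : ℕ → (∀ i, E i) → ℝ)
    (hv : ∀ k x, v k x = ∏ i, u i (nk i k) (x i)) :
    (∀ k : ℕ, ∀ᵐ x ∂(Measure.pi m), 0 ≤ v k x ∧ v k x ≤ 1)
    ∧ (∀ᵐ x ∂(Measure.pi m), Tendsto (fun k : ℕ => v k x) atTop (nhds 1))
    ∧ Tendsto (fun k : ℕ => ∑ i, Q i (u i (nk i k))
        * ∏ j ∈ Finset.univ.erase i, ∫ x, (u j (nk j k) x) ^ 2 ∂(m j)) atTop (nhds 0) := by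
  refine ⟨?_, ?_, ?_⟩
  · intro k
    have h : ∀ᵐ x ∂(Measure.pi m), ∀ i, 0 ≤ u i (nk i k) (x i) ∧ u i (nk i k) (x i) ≤ 1 :=
      Measure.ae_pi_le_pi (Filter.eventually_pi (fun i => hbd i k))
    filter_upwards [h] with x hx
    rw [hv]
    constructor
    · exact Finset.prod_nonneg fun i _ => (hx i).1
    · exact Finset.prod_le_one (fun i _ => (hx i).1) (fun i _ => (hx i).2)
  · have h : ∀ᵐ x ∂(Measure.pi m),
        ∀ i, Tendsto (fun k : ℕ => u i (nk i k) (x i)) atTop (nhds 1) :=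
      Measure.ae_pi_le_pi (Filter.eventually_pi hlim)
    filter_upwards [h] with x hx
    have : Tendsto (fun k : ℕ => ∏ i, u i (nk i k) (x i)) atTop
        (nhds (∏ i : Fin N, (1 : ℝ))) := tendsto_finset_prod _ fun i _ => hx i
    simpa [hv] using this
  · have hInn : ∀ i k, (0:ℝ) ≤ ∫ x, (u i (nk i k) x) ^ 2 ∂(m i) := fun i k =>
      integral_nonneg fun x => sq_nonneg _
    refine squeeze_zero' ?_ ?_ (by have h0 := hprod.const_mul (N : ℝ); rwa [mul_zero] at h0)
    · filter_upwards with k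
      exact Finset.sum_nonneg fun i _ =>
        mul_nonneg (hQnonneg _ _) (Finset.prod_nonneg fun j _ => hInn j k)
    · filter_upwards [eventually_ge_atTop 1] with k hk
      calc (∑ i, Q i (u i (nk i k))
            * ∏ j ∈ Finset.univ.erase i, ∫ x, (u j (nk j k) x) ^ 2 ∂(m j))
          ≤ ∑ i : Fin N, (1 / (k : ℝ)) * ∏ j, ∫ x, (u j (nk j k) x) ^ 2 ∂(m j) := by
            refine Finset.sum_le_sum fun i _ => ?_
            have h1 : Q i (u i (nk i k))
                * ∏ j ∈ Finset.univ.erase i, ∫ x, (u j (nk j k) x) ^ 2 ∂(m j)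
                ≤ ((1 / (k : ℝ)) * ∫ x, (u i (nk i k) x) ^ 2 ∂(m i))
                * ∏ j ∈ Finset.univ.erase i, ∫ x, (u j (nk j k) x) ^ 2 ∂(m j) :=
              mul_le_mul_of_nonneg_right (hmem i k hk)
                (Finset.prod_nonneg fun j _ => hInn j k)
            rw [mul_assoc] at h1
            have h2 : (∫ x, (u i (nk i k) x) ^ 2 ∂(m i))
                * ∏ j ∈ Finset.univ.erase i, ∫ x, (u j (nk j k) x) ^ 2 ∂(m j)
                = ∏ j, ∫ x, (u j (nk j k) x) ^ 2 ∂(m j) :=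
              Finset.mul_prod_erase Finset.univ
                (fun j => ∫ x, (u j (nk j k) x) ^ 2 ∂(m j)) (Finset.mem_univ i)
            rwa [h2] at h1
        _ = (N : ℝ) * ((1 / (k : ℝ)) * ∏ j, ∫ x, (u j (nk j k) x) ^ 2 ∂(m j)) := by
            simp [Finset.sum_const, nsmul_eq_mul]
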